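/- Let m ≥ 2 and suppose integers n, l, k₁,…,k_m satisfy: l ≥ 1, 0 ≤ k₁ ≤ ⋯ ≤ k_l ≤ n/2, k_{l+1} = ⋯ = k_m = 1, some kᵢ ≠ 0, and M := Σ_{j=1}^{m} kⱼ - (1/n)Σ_{j=1}^{m} kⱼ² + 2l is an even integer with 0 < M ≤ 2m. Then n ≤ m² + m - 1. -/

import Mathlib

set_option maxHeartbeats 2000000

/-- Let `m ≥ 2` and suppose integers `n, l, k₁,…,k_m` satisfy: `l ≥ 1`,
`0 ≤ k₁ ≤ ⋯ ≤ k_l ≤ n/2`, `k_{l+1} = ⋯ = k_m = 1`, some `kᵢ ≠ 0`, and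
`M := Σⱼ kⱼ - (1/n)Σⱼ kⱼ² + 2l` is an even integer with `0 < M ≤ 2m`.
Then `n ≤ m² + m - 1`. -/
theorem stmt_5 (m l : ℕ) (n : ℤ) (k : ℕ → ℤ)
    (hm : 2 ≤ m) (hl : 1 ≤ l) (hlm : l ≤ m)
    (h0 : 0 ≤ k 1)
    (hmono : ∀ i j : ℕ, 1 ≤ i → i ≤ j → j ≤ l → k i ≤ k j)
    (hhalf : (k l : ℝ) ≤ (n : ℝ) / 2)
    (hone : ∀ j : ℕ, l < j → j ≤ m → k j = 1)
    (hne : ∃ i ∈ Finset.Icc 1 m, k i ≠ 0)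
    (heven : ∃ z : ℤ,
      (∑ j ∈ Finset.Icc 1 m, (k j : ℝ))
        - (1 / (n : ℝ)) * (∑ j ∈ Finset.Icc 1 m, (k j : ℝ) ^ 2) + 2 * l
        = 2 * (z : ℝ))
    (hpos : 0 < (∑ j ∈ Finset.Icc 1 m, (k j : ℝ))
        - (1 / (n : ℝ)) * (∑ j ∈ Finset.Icc 1 m, (k j : ℝ) ^ 2) + 2 * l)
    (hle : (∑ j ∈ Finset.Icc 1 m, (k j : ℝ))
        - (1 / (n : ℝ)) * (∑ j ∈ Finset.Icc 1 m, (k j : ℝ) ^ 2) + 2 * l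
        ≤ 2 * m) :
    n ≤ (m : ℤ) ^ 2 + m - 1 := by
  by_contra hcon
  push_neg at hcon
  have hm2 : (2:ℤ) ≤ (m:ℤ) := by exact_mod_cast hm
  have hl1 : (1:ℤ) ≤ (l:ℤ) := by exact_mod_cast hl
  have hlmZ : (l:ℤ) ≤ (m:ℤ) := by exact_mod_cast hlm
  have hn1 : (1:ℤ) ≤ n := by nlinarith [sq_nonneg ((m:ℤ) - 1)]
  have hnpos : (0:ℝ) < (n:ℝ) := by exact_mod_cast (show (0:ℤ) < n by linarith)
  have hnne : (n:ℝ) ≠ 0 := ne_of_gt hnpos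
  obtain ⟨z, hz⟩ := heven
  clear hpos
  -- integer sums
  set A : ℤ := ∑ j ∈ Finset.Icc 1 m, k j with hA
  set B : ℤ := ∑ j ∈ Finset.Icc 1 m, (k j)^2 with hB
  have hAc : (∑ j ∈ Finset.Icc 1 m, (k j : ℝ)) = (A:ℝ) := by rw [hA]; push_cast; ring
  have hBc : (∑ j ∈ Finset.Icc 1 m, (k j : ℝ)^2) = (B:ℝ) := by rw [hB]; push_cast; ring
  rw [hAc, hBc] at hz hle
  -- split the sums
  have hIcc : Finset.Icc 1 m = Finset.Ioc 0 m := by rw [← Finset.Icc_add_one_left_eq_Ioc 0 m, zero_add]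
  have hIccl : Finset.Icc 1 l = Finset.Ioc 0 l := by rw [← Finset.Icc_add_one_left_eq_Ioc 0 l, zero_add]
  have hsplit : ∀ f : ℕ → ℤ, ∑ j ∈ Finset.Icc 1 m, f j
      = ∑ j ∈ Finset.Icc 1 l, f j + ∑ j ∈ Finset.Ioc l m, f j := by
    intro f
    rw [hIcc, hIccl, Finset.sum_Ioc_consecutive _ (Nat.zero_le l) hlm]
  set K : ℤ := ∑ j ∈ Finset.Icc 1 l, k j with hKdef
  set Q : ℤ := ∑ j ∈ Finset.Icc 1 l, (k j)^2 with hQdef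
  have hone' : ∀ j ∈ Finset.Ioc l m, k j = 1 := fun j hj =>
    hone j (Finset.mem_Ioc.mp hj).1 (Finset.mem_Ioc.mp hj).2
  have hcard : ((m - l : ℕ) : ℤ) = (m:ℤ) - (l:ℤ) := Nat.cast_sub hlm
  have e1 : ∑ j ∈ Finset.Ioc l m, k j = ((m - l : ℕ) : ℤ) := by
    rw [Finset.sum_congr rfl hone']
    simp
  have e2 : ∑ j ∈ Finset.Ioc l m, (k j)^2 = ((m - l : ℕ) : ℤ) := by
    rw [Finset.sum_congr rfl (g := fun _ => (1:ℤ))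
      (fun j hj => by rw [hone' j hj]; ring)]
    simp
  have hA' : A = K + ((m:ℤ) - l) := by
    rw [hA, hsplit, ← hKdef, e1, hcard]
  have hB' : B = Q + ((m:ℤ) - l) := by
    rw [hB, hsplit, ← hQdef, e2, hcard]
  -- basic facts about k j for j ≤ l
  have hkj0 : ∀ j ∈ Finset.Icc 1 l, 0 ≤ k j := by
    intro j hj
    obtain ⟨h1, h2⟩ := Finset.mem_Icc.mp hj
    exact h0.trans (hmono 1 j le_rfl h1 h2)
  have hkjl : ∀ j ∈ Finset.Icc 1 l, k j ≤ k l := by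
    intro j hj
    obtain ⟨h1, h2⟩ := Finset.mem_Icc.mp hj
    exact hmono j l h1 h2 le_rfl
  have hkl0 : 0 ≤ k l := h0.trans (hmono 1 l le_rfl hl le_rfl)
  have hkl2 : 2 * k l ≤ n := by
    have : (2 * k l : ℝ) ≤ (n:ℝ) := by push_cast; linarith
    exact_mod_cast this
  have hK0 : 0 ≤ K := Finset.sum_nonneg hkj0
  have hklK : k l ≤ K := by
    refine Finset.single_le_sum hkj0 ?_
    exact Finset.mem_Icc.mpr ⟨hl, le_rfl⟩
  have hQle : Q ≤ K * k l := by
    rw [hQdef, hKdef, Finset.sum_mul]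
    refine Finset.sum_le_sum ?_
    intro j hj
    have h1 := hkj0 j hj
    have h2 := hkjl j hj
    nlinarith
  have h2Q : 2 * Q ≤ n * K := by
    rw [hQdef, hKdef, Finset.mul_sum, Finset.mul_sum]
    refine Finset.sum_le_sum ?_
    intro j hj
    have h1 := hkj0 j hj
    have h2 := hkjl j hj
    nlinarith
  -- B ≥ 1
  have hB1 : 1 ≤ B := by
    obtain ⟨i, hi, hki⟩ := hne
    have h1 : 1 ≤ (k i)^2 := by
      have := Int.one_le_abs (show k i ≠ 0 from hki)
      nlinarith [sq_abs (k i)]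
    calc (1:ℤ) ≤ (k i)^2 := h1
      _ ≤ B := Finset.single_le_sum (fun j _ => sq_nonneg (k j)) hi
  clear_value A B K Q
  clear hA hB hQdef hKdef hAc hBc hsplit hIcc hIccl
  -- divisibility: B = n * t
  have hBt : B = n * (A + 2*(l:ℤ) - 2*z) := by
    have hr : (B:ℝ) = (n:ℝ) * ((A:ℝ) + 2*(l:ℝ) - 2*(z:ℝ)) := by
      have h3 : (1/(n:ℝ)) * (B:ℝ) = (A:ℝ) + 2*(l:ℝ) - 2*(z:ℝ)  := by linarith
      rw [← h3]
      field_simp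
    exact_mod_cast hr
  have ht1 : 1 ≤ A + 2*(l:ℤ) - 2*z := by
    by_contra h
    push_neg at h
    have h2 : A + 2*(l:ℤ) - 2*z ≤ 0 := by linarith
    have h3 : n * (A + 2*(l:ℤ) - 2*z) ≤ n * 0 :=
      mul_le_mul_of_nonneg_left h2 (by linarith)
    rw [mul_zero] at h3
    linarith [hBt]
  have hnB : n ≤ B := by
    have h3 : n * 1 ≤ n * (A + 2*(l:ℤ) - 2*z) :=
      mul_le_mul_of_nonneg_left ht1 (by linarith)
    rw [mul_one] at h3
    linarith [hBt]
  -- integer version of hle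
  have hleZ : n * A - B + 2*(l:ℤ)*n ≤ 2*(m:ℤ)*n := by
    have hr : (n:ℝ) * (A:ℝ) - (B:ℝ) + 2*(l:ℝ)*(n:ℝ) ≤ 2*(m:ℝ)*(n:ℝ) := by
      have h1 : (n:ℝ) * ((A:ℝ) - (1/(n:ℝ))*(B:ℝ) + 2*(l:ℝ)) ≤ (n:ℝ) * (2*(m:ℝ)) :=
        mul_le_mul_of_nonneg_left hle (le_of_lt hnpos)
      have h2 : (n:ℝ) * ((A:ℝ) - (1/(n:ℝ))*(B:ℝ) + 2*(l:ℝ))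
          = (n:ℝ)*(A:ℝ) - (B:ℝ) + 2*(l:ℝ)*(n:ℝ) := by field_simp
      rw [h2] at h1
      linarith
    exact_mod_cast hr
  -- abbreviate s = m - l
  set s : ℤ := (m:ℤ) - (l:ℤ) with hsdef
  have hs0 : 0 ≤ s := by rw [hsdef]; linarith
  have hs1 : s ≤ (m:ℤ) - 1 := by rw [hsdef]; linarith
  have hstar : n * K - Q ≤ s * (n + 1) := by
    rw [hA', hB'] at hleZ
    rw [hsdef]
    nlinarith [hleZ]
  clear_value s
  have hK2s : K ≤ 2 * s := by
    by_contra h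
    push_neg at h
    have h' : 2*s + 1 ≤ K := by linarith
    nlinarith [mul_le_mul_of_nonneg_left h' (show (0:ℤ) ≤ n by linarith),
      sq_nonneg ((m:ℤ) - 1)]
  have hn2s : 0 ≤ n - 2*s := by nlinarith [sq_nonneg ((m:ℤ) - 1)]
  have hKs1 : K ≤ s + 1 := by
    by_contra h
    push_neg at h
    have h' : s + 2 ≤ K := by linarith
    nlinarith [mul_le_mul_of_nonneg_left (show k l ≤ 2*s from hklK.trans hK2s) hK0,
      mul_le_mul_of_nonneg_right h' hn2s,
      mul_le_mul hs1 hs1 hs0 (by linarith : (0:ℤ) ≤ (m:ℤ) - 1)]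
  -- final contradiction
  have hklbd : k l ≤ s + 1 := hklK.trans hKs1
  have hKk : K * k l ≤ (s+1) * (s+1) :=
    mul_le_mul hKs1 hklbd hkl0 (by linarith)
  nlinarith [hnB, hQle, hKk, hB',
    mul_le_mul hs1 hs1 hs0 (by linarith : (0:ℤ) ≤ (m:ℤ) - 1)]
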